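/- Let W_{n+1} be the wheel on n+1 vertices (n ≥ 4), and let 2, λ₂, …, λ_n be the eigenvalues of the adjacency matrix of the cycle C_n. Then the spectrum of the eccentricity matrix of W_{n+1} is {(n−3) ± √((n−3)² + n) each with multiplicity 1} ∪ {−2(λ_i + 1) : i = 2, …, n}. -/

import Mathlib

open Matrix

/-- The eccentricity of a vertex: the largest distance from it to any vertex. -/
noncomputable def SimpleGraph.ecc {V : Type*} [Fintype V] (G : SimpleGraph V) (v : V) : ℕ :=
  Finset.univ.sup (G.dist v)

/-- The eccentricity matrix of a graph: `ε(G)_{uw} = d(u,w)` if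
`d(u,w) = min{e(u), e(w)}`, and `0` otherwise. -/
noncomputable def SimpleGraph.eccMatrix {V : Type*} [Fintype V] (G : SimpleGraph V) :
    Matrix V V ℝ :=
  Matrix.of fun u w =>
    if G.dist u w = min (G.ecc u) (G.ecc w) then (G.dist u w : ℝ) else 0

open Polynomial

/-- The join `G ∨ K₁`: a new vertex adjacent to every vertex of `G`. -/
def joinK1 {V : Type*} (G : SimpleGraph V) : SimpleGraph (V ⊕ Unit) :=
  SimpleGraph.fromRel fun x y =>
    (∃ u v, x = Sum.inl u ∧ y = Sum.inl v ∧ G.Adj u v) ∨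
    (∃ u, x = Sum.inl u ∧ y = Sum.inr ())

open SimpleGraph

set_option linter.unnecessarySeqFocus false

variable {V : Type*} (G : SimpleGraph V)

lemma adj_ll (u v : V) : (joinK1 G).Adj (Sum.inl u) (Sum.inl v) ↔ G.Adj u v := by
  simp only [joinK1, SimpleGraph.fromRel_adj]
  constructor
  · rintro ⟨h, (⟨a,b,ha,hb,hab⟩|⟨a,ha,hb⟩)|(⟨a,b,ha,hb,hab⟩|⟨a,ha,hb⟩)⟩ <;>
      (simp_all; try exact hab.symm)
  · intro h
    exact ⟨by simpa using h.ne, Or.inl (Or.inl ⟨u, v, rfl, rfl, h⟩)⟩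

lemma adj_lr (u : V) : (joinK1 G).Adj (Sum.inl u) (Sum.inr ()) := by
  simp only [joinK1, SimpleGraph.fromRel_adj]
  exact ⟨by simp, Or.inl (Or.inr ⟨u, rfl, by trivial⟩)⟩

-- distance lemmas
lemma dist_lr (u : V) : (joinK1 G).dist (Sum.inl u) (Sum.inr ()) = 1 :=
  dist_eq_one_iff_adj.2 (adj_lr G u)

lemma dist_ll_le (u v : V) : (joinK1 G).dist (Sum.inl u) (Sum.inl v) ≤ 2 := by
  refine le_trans (dist_le (Walk.cons (adj_lr G u)
    (Walk.cons ((adj_lr G v).symm) Walk.nil))) ?_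
  simp

lemma dist_ll (u v : V) (hne : u ≠ v) (hadj : ¬ G.Adj u v) :
    (joinK1 G).dist (Sum.inl u) (Sum.inl v) = 2 := by
  have h2 := dist_ll_le G u v
  have h0 : (joinK1 G).dist (Sum.inl u) (Sum.inl v) ≠ 0 := by
    rw [dist_ne_zero_iff_ne_and_reachable]
    exact ⟨by simpa using hne, ((adj_lr G u).reachable).trans ((adj_lr G v).symm.reachable)⟩
  have h1 : (joinK1 G).dist (Sum.inl u) (Sum.inl v) ≠ 1 := by
    simp only [ne_eq, dist_eq_one_iff_adj, adj_ll]
    exact hadj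
  omega

-- eccentricities for the wheel
lemma ecc_hub (m : ℕ) : SimpleGraph.ecc (joinK1 (cycleGraph (m+4))) (Sum.inr ()) = 1 := by
  apply le_antisymm
  · apply Finset.sup_le
    rintro (u | u) _
    · rw [dist_comm]; exact le_of_eq (dist_lr _ u)
    · simp [SimpleGraph.dist_self]
  · calc 1 = (joinK1 (cycleGraph (m+4))).dist (Sum.inr ()) (Sum.inl 0) := by
              rw [dist_comm]; exact (dist_lr _ 0).symm
    _ ≤ _ := Finset.le_sup (Finset.mem_univ _)

lemma ecc_rim (m : ℕ) (u : Fin (m+4)) :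
    SimpleGraph.ecc (joinK1 (cycleGraph (m+4))) (Sum.inl u) = 2 := by
  set W := joinK1 (cycleGraph (m+4))
  apply le_antisymm
  · apply Finset.sup_le
    rintro (v | v) _
    · exact dist_ll_le _ u v
    · exact le_trans (le_of_eq (dist_lr _ u)) (by norm_num)
  · by_contra hlt
    push_neg at hlt
    have hall : ∀ v : Fin (m+4), v ≠ u → (cycleGraph (m+4)).Adj u v := by
      intro v hv
      have := le_trans (Finset.le_sup (f := W.dist (Sum.inl u))
        (Finset.mem_univ (Sum.inl v))) (Nat.lt_succ_iff.1 hlt)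
      by_contra hadj
      rw [dist_ll _ u v (Ne.symm hv) hadj] at this
      omega
    have hsub : Finset.univ.erase u ⊆ (cycleGraph (m+4)).neighborFinset u := by
      intro v hv
      rw [SimpleGraph.mem_neighborFinset]
      exact hall v (Finset.ne_of_mem_erase hv)
    have hcard := Finset.card_le_card hsub
    rw [Finset.card_erase_of_mem (Finset.mem_univ u)] at hcard
    have hdeg : (cycleGraph (m+4)).degree u = 2 := cycleGraph_degree_three_le (n := m+1)
    rw [SimpleGraph.card_neighborFinset_eq_degree, hdeg] at hcard
    simp [Finset.card_erase_of_mem] at hcard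

lemma SimpleGraph.eccMatrix_eq (m : ℕ) :
    SimpleGraph.eccMatrix (joinK1 (cycleGraph (m+4))) =
      Matrix.fromBlocks
        ((2:ℝ) • Matrix.of (fun _ _ => (1:ℝ)) - (2:ℝ) • 1 -
          (2:ℝ) • (cycleGraph (m+4)).adjMatrix ℝ)
        (Matrix.of fun _ _ => (1:ℝ)) (Matrix.of fun _ _ => (1:ℝ)) 0 := by
  ext x y
  rcases x with u | u <;> rcases y with v | v
  · simp only [SimpleGraph.eccMatrix, Matrix.of_apply, ecc_rim, Matrix.fromBlocks_apply₁₁]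
    by_cases hv : u = v
    · subst hv
      simp [SimpleGraph.dist_self, Matrix.one_apply]
    · by_cases hadj : (cycleGraph (m+4)).Adj u v
      · rw [dist_eq_one_iff_adj.2 ((adj_ll _ u v).2 hadj)]
        simp [Matrix.one_apply, hv, hadj]
      · rw [dist_ll _ u v hv hadj]
        simp [Matrix.one_apply, hv, hadj]
  · cases v
    simp [SimpleGraph.eccMatrix, ecc_rim, ecc_hub, dist_lr]
  · cases u
    simp only [SimpleGraph.eccMatrix, Matrix.of_apply, ecc_rim, ecc_hub, Matrix.fromBlocks_apply₂₁]
    rw [SimpleGraph.dist_comm, dist_lr]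
    simp
  · cases u; cases v
    simp [SimpleGraph.eccMatrix, ecc_hub, SimpleGraph.dist_self]

lemma evalcp {k : Type*} [DecidableEq k] [Fintype k] (M : Matrix k k ℝ) (x : ℝ) :
    M.charpoly.eval x = (x • (1 : Matrix k k ℝ) - M).det := by
  rw [Matrix.charpoly, ← Polynomial.coe_evalRingHom, RingHom.map_det]
  congr 1
  ext i j
  by_cases h : i = j <;>
    simp [Matrix.charmatrix_apply, h, Matrix.one_apply, Matrix.diagonal_apply]

lemma det_key (m : ℕ) (lam : Fin (m+3) → ℝ)
    (hA : ∀ y : ℝ, (((cycleGraph (m+4)).adjMatrix ℝ).charpoly).eval y =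
      (y - 2) * ∏ i : Fin (m+3), (y - lam i))
    (x : ℝ) (hx : x ≠ 0) (hx6 : x + 6 ≠ 0) (hxi : ∀ i, x + (2 * lam i + 2) ≠ 0) :
    (SimpleGraph.eccMatrix (joinK1 (cycleGraph (m+4)))).charpoly.eval x =
      (x^2 - 2*((m:ℝ)+1)*x - ((m:ℝ)+4)) * ∏ i : Fin (m+3), (x + (2 * lam i + 2)) := by
  set A : Matrix (Fin (m+4)) (Fin (m+4)) ℝ := (cycleGraph (m+4)).adjMatrix ℝ with hAdef
  set P : Matrix (Fin (m+4)) (Fin (m+4)) ℝ := (x+2) • 1 + (2:ℝ) • A with hPdef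
  set Q : ℝ := ∏ i : Fin (m+3), (x + (2 * lam i + 2)) with hQdef
  -- determinant of P
  have hPdet : P.det = (x + 6) * Q := by
    have h1 : P = (-2:ℝ) • ((-(x+2)/2) • (1 : Matrix (Fin (m+4)) (Fin (m+4)) ℝ) - A) := by
      ext i j
      by_cases h : i = j <;>
        simp [hPdef, Matrix.one_apply, h, Matrix.smul_apply] <;> ring
    rw [h1, Matrix.det_smul, ← evalcp, hA, Fintype.card_fin]
    have h2 : ∀ i : Fin (m+3), -(x+2)/2 - lam i = (-1/2) * (x + (2 * lam i + 2)) := by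
      intro i; ring
    rw [Finset.prod_congr rfl (fun i _ => h2 i), Finset.prod_mul_distrib,
      Finset.prod_const, Finset.card_univ, Fintype.card_fin, hQdef]
    have h3 : ((-2:ℝ))^(m+4) * (((-1:ℝ)/2)^(m+3)) = -2 := by
      have h4 : ((-2:ℝ))^(m+4) * (((-1:ℝ)/2)^(m+3)) =
          ((-2:ℝ) * ((-1:ℝ)/2))^(m+3) * (-2) := by
        rw [mul_pow]; ring
      rw [h4]; norm_num
    calc ((-2:ℝ))^(m+4) * ((-(x+2)/2 - 2) * (((-1:ℝ)/2)^(m+3) *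
          ∏ i : Fin (m+3), (x + (2 * lam i + 2))))
        = (((-2:ℝ))^(m+4) * (((-1:ℝ)/2)^(m+3))) * ((-(x+2)/2 - 2) *
          ∏ i : Fin (m+3), (x + (2 * lam i + 2))) := by ring
      _ = (x + 6) * ∏ i : Fin (m+3), (x + (2 * lam i + 2)) := by rw [h3]; ring
  have hQne : Q ≠ 0 := Finset.prod_ne_zero_iff.2 fun i _ => hxi i
  have hPunit : IsUnit P.det := by
    rw [hPdet]; exact (mul_ne_zero hx6 hQne).isUnit
  -- P⁻¹ applied to ones
  have hPones : P *ᵥ (Function.const _ (1:ℝ)) = Function.const _ (x + 6) := by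
    funext i
    rw [hPdef, Matrix.add_mulVec, Matrix.smul_mulVec, Matrix.smul_mulVec,
      Matrix.one_mulVec]
    have h2' : (A *ᵥ Function.const _ (1:ℝ)) i = 2 := by
      rw [hAdef, SimpleGraph.adjMatrix_mulVec_const_apply,
        cycleGraph_degree_three_le (n := m+1)]
      norm_num
    simp only [Pi.add_apply, Pi.smul_apply, smul_eq_mul, h2', Function.const_apply]
    ring
  have hPinvones : P⁻¹ *ᵥ (Function.const _ (1:ℝ)) = Function.const _ ((x+6)⁻¹) := by
    have h4 : Function.const (Fin (m+4)) (1:ℝ) = P⁻¹ *ᵥ (Function.const _ (x + 6)) := by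
      rw [← hPones, Matrix.mulVec_mulVec, Matrix.nonsing_inv_mul P hPunit, Matrix.one_mulVec]
    have h5 : Function.const (Fin (m+4)) (x + 6) = (x + 6) • Function.const _ (1:ℝ) := by
      funext i; simp [Function.const]
    rw [h5, Matrix.mulVec_smul] at h4
    funext i
    have h6 := congrFun h4 i
    simp only [Pi.smul_apply, smul_eq_mul, Function.const_apply] at h6
    simp only [Function.const_apply]
    exact eq_inv_of_mul_eq_one_left (by linear_combination -h6)
  -- sum of entries of P⁻¹
  have hsum : ∑ i, ∑ j, P⁻¹ i j = (m+4) * (x+6)⁻¹ := by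
    have h7 : ∀ i, ∑ j, P⁻¹ i j = (x+6)⁻¹ := by
      intro i
      have := congrFun hPinvones i
      simpa [Matrix.mulVec, dotProduct, Function.const] using this
    simp [h7]
  -- main computation
  rw [evalcp, SimpleGraph.eccMatrix_eq]
  set cvec : Matrix (Fin (m+4)) Unit ℝ := Matrix.of fun _ _ => (1:ℝ) with hcvec
  set rvec : Matrix Unit (Fin (m+4)) ℝ := Matrix.of fun _ _ => (1:ℝ) with hrvec
  set K : Matrix (Fin (m+4)) (Fin (m+4)) ℝ := Matrix.of fun _ _ => (1:ℝ) with hK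
  set B : Matrix (Fin (m+4)) (Fin (m+4)) ℝ := (2:ℝ) • K - (2:ℝ) • 1 - (2:ℝ) • A with hB
  have hblock : x • (1 : Matrix (Fin (m+4) ⊕ Unit) (Fin (m+4) ⊕ Unit) ℝ) -
      Matrix.fromBlocks B cvec rvec 0 =
      Matrix.fromBlocks (x • 1 - B) (-cvec) (-rvec) (x • (1 : Matrix Unit Unit ℝ)) := by
    ext i j
    rcases i with i | i <;> rcases j with j | j <;>
      simp [Matrix.one_apply, Matrix.smul_apply]
  rw [hblock]
  letI iD : Invertible (x • (1 : Matrix Unit Unit ℝ)) :=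
    ⟨x⁻¹ • 1, by rw [Matrix.smul_mul, Matrix.mul_smul, smul_smul, inv_mul_cancel₀ hx,
        one_smul, Matrix.one_mul], by rw [Matrix.smul_mul, Matrix.mul_smul, smul_smul,
        mul_inv_cancel₀ hx, one_smul, Matrix.one_mul]⟩
  rw [Matrix.det_fromBlocks₂₂]
  have hdetD : (x • (1 : Matrix Unit Unit ℝ)).det = x := by
    rw [Matrix.det_unique]
    simp [Matrix.one_apply]
  have hinv : (⅟(x • (1 : Matrix Unit Unit ℝ))) = x⁻¹ • 1 := rfl
  have hmid : (x • 1 - B) - (-cvec) * (⅟(x • (1 : Matrix Unit Unit ℝ))) * (-rvec) =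
      P + Matrix.replicateCol Unit (fun _ : Fin (m+4) => -(2 + x⁻¹)) * Matrix.replicateRow Unit (fun _ : Fin (m+4) => (1:ℝ)) := by
    rw [hinv]
    ext i j
    by_cases h : i = j <;>
      simp only [Matrix.sub_apply, Matrix.add_apply, Matrix.mul_apply, Matrix.smul_apply,
        Matrix.neg_apply, Matrix.one_apply, Matrix.of_apply, Matrix.replicateCol_apply,
        Matrix.replicateRow_apply, hB, hK, hcvec, hrvec, hPdef, Finset.univ_unique,
        Finset.sum_singleton, smul_eq_mul, h, if_true, if_pos, if_neg] <;>
      simp [h] <;> ring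
  rw [hmid, Matrix.det_add_replicateCol_mul_replicateRow hPunit]
  have hlast : ((1 + Matrix.replicateRow Unit (fun _ : Fin (m+4) => (1:ℝ)) * P⁻¹ *
      Matrix.replicateCol Unit (fun _ : Fin (m+4) => -(2 + x⁻¹)) : Matrix Unit Unit ℝ)).det =
      1 - (2 + x⁻¹) * ((m+4) * (x+6)⁻¹) := by
    rw [Matrix.det_unique]
    simp only [Matrix.add_apply, Matrix.one_apply_eq, Matrix.mul_apply, Matrix.replicateRow_apply,
      Matrix.replicateCol_apply]
    rw [show ∑ j, (∑ i, (1:ℝ) * P⁻¹ i j) * -(2 + x⁻¹) =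
        -(2 + x⁻¹) * ∑ j, ∑ i, P⁻¹ i j by rw [Finset.mul_sum]; congr 1; funext j; ring]
    rw [Finset.sum_comm, hsum]
    ring
  rw [hdetD, hlast, hPdet]
  field_simp
  ring

/-- The wheel `W_{n+1} = Cₙ ∨ K₁` (`n ≥ 4`): if the adjacency eigenvalues of the cycle
`Cₙ` are `2, λ₂, …, λₙ`, then the spectrum of the eccentricity matrix of `W_{n+1}` is
`(n-3) ± √((n-3)² + n)` together with `-2(λᵢ + 1)` for `i = 2, …, n`. -/
theorem eccMatrix_wheel_spectrum (n : ℕ) (hn : 4 ≤ n) (lam : Fin (n - 1) → ℝ)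
    (hspec : ((SimpleGraph.cycleGraph n).adjMatrix ℝ).charpoly.roots =
      (2 : ℝ) ::ₘ Multiset.map lam Finset.univ.val) :
    (joinK1 (SimpleGraph.cycleGraph n)).eccMatrix.charpoly.roots =
      (((n : ℝ) - 3) + Real.sqrt (((n : ℝ) - 3) ^ 2 + n)) ::ₘ
        (((n : ℝ) - 3) - Real.sqrt (((n : ℝ) - 3) ^ 2 + n)) ::ₘ
          Multiset.map (fun i => -2 * (lam i + 1)) Finset.univ.val := by
  obtain ⟨m, rfl⟩ : ∃ m, n = m + 4 := ⟨n - 4, by omega⟩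
  set A : Matrix (Fin (m+4)) (Fin (m+4)) ℝ := (SimpleGraph.cycleGraph (m+4)).adjMatrix ℝ
  set lam' : Fin (m+3) → ℝ := lam
  -- factorization of the cycle's charpoly
  have hcard : A.charpoly.roots.card = A.charpoly.natDegree := by
    rw [hspec, Matrix.charpoly_natDegree_eq_dim]
    simp only [Multiset.card_cons, Multiset.card_map]
    simp [Fintype.card_fin]
  have hfact : A.charpoly = (A.charpoly.roots.map fun a => X - C a).prod :=
    (prod_multiset_X_sub_C_of_monic_of_roots_card_eq (A.charpoly_monic) hcard).symm
  have hA : ∀ y : ℝ, A.charpoly.eval y = (y - 2) * ∏ i : Fin (m+3), (y - lam' i) := by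
    intro y
    conv_lhs => rw [hfact, hspec]
    rw [Multiset.map_cons, Multiset.map_map, Multiset.prod_cons, Polynomial.eval_mul,
      eval_multiset_prod, Multiset.map_map, Finset.prod_eq_multiset_prod]
    simp only [Function.comp_apply, eval_sub, eval_X, eval_C]
    rfl
  -- the target multiset
  set s : ℝ := ((m:ℝ)+1)^2 + ((m:ℝ)+4) with hs
  have hs0 : 0 ≤ s := by positivity
  set r₁ : ℝ := ((m:ℝ)+1) + Real.sqrt s with hr₁
  set r₂ : ℝ := ((m:ℝ)+1) - Real.sqrt s with hr₂
  have hquad : ∀ x : ℝ, (x - r₁) * (x - r₂) = x^2 - 2*((m:ℝ)+1)*x - ((m:ℝ)+4) := by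
    intro x
    have h := Real.sq_sqrt hs0
    rw [hr₁, hr₂]
    nlinarith [h]
  set T : Multiset ℝ := r₁ ::ₘ r₂ ::ₘ Multiset.map (fun i => -2 * (lam i + 1)) Finset.univ.val
    with hT
  -- key polynomial identity
  set bad : Finset ℝ := {0, -6} ∪ Finset.univ.image fun i => -(2 * lam' i + 2) with hbad
  have hbadfin : ((bad : Finset ℝ) : Set ℝ).Finite := Finset.finite_toSet _
  have hkey : (SimpleGraph.eccMatrix (joinK1 (SimpleGraph.cycleGraph (m+4)))).charpoly =
      (T.map fun a => X - C a).prod := by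
    apply Polynomial.eq_of_infinite_eval_eq
    apply Set.Infinite.mono (s := ((bad : Finset ℝ) : Set ℝ)ᶜ) ?_ hbadfin.infinite_compl
    intro x hx
    have hx' : x ∉ bad := hx
    have hx0 : x ≠ 0 := by
      intro h; exact hx' (Finset.mem_union_left _ (by simp [hbad, h]))
    have hx6 : x + 6 ≠ 0 := by
      intro h
      exact hx' (Finset.mem_union_left _ (by
        simp only [Finset.mem_insert, Finset.mem_singleton]
        right; linarith))
    have hxi : ∀ i, x + (2 * lam' i + 2) ≠ 0 := by
      intro i h
      exact hx' (Finset.mem_union_right _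
        (Finset.mem_image.2 ⟨i, Finset.mem_univ i, by linarith⟩))
    show eval x _ = eval x _
    rw [det_key m lam' hA x hx0 hx6 hxi, hT]
    rw [Multiset.map_cons, Multiset.map_cons, Multiset.prod_cons, Multiset.prod_cons,
      eval_mul, eval_mul, eval_sub, eval_X, eval_C, eval_sub, eval_X, eval_C,
      eval_multiset_prod, Multiset.map_map]
    simp only [Function.comp_apply, eval_sub, eval_X, eval_C]
    rw [Multiset.map_map, ← Finset.prod_eq_multiset_prod]
    have hprod : (∏ i : Fin (m+4-1), ((fun a => x - a) ∘ fun i => -2 * (lam i + 1)) i) =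
        ∏ i : Fin (m+3), (x + (2 * lam' i + 2)) :=
      Finset.prod_congr rfl (fun i _ => by simp only [Function.comp_apply]; ring)
    rw [hprod, ← hquad x]
    ring
  rw [hkey, Polynomial.roots_multiset_prod_X_sub_C, hT]
  have hc3 : (((m+4:ℕ):ℝ) - 3)^2 + ((m+4:ℕ):ℝ) = s := by rw [hs]; push_cast; ring
  have hc2 : (((m+4:ℕ):ℝ) - 3) = (m:ℝ)+1 := by push_cast; ring
  rw [hc3, hc2]
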